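/- (Validity of Split Conformal Prediction, upper bound.) Let (Ω, P) be a probability space, E a measurable space, n ∈ ℕ, and let (X_1, Y_1), …, (X_{n+1}, Y_{n+1}) be E × ℝ-valued random variables that are exchangeable. Let μ : E → ℝ be a measurable function, α ∈ (0,1), and k = ⌈(1−α)(n+1)⌉, and assume k ≤ n. Define S_i(ω) = |Y_i(ω) − μ(X_i(ω))| for i = 1, …, n+1, and let Q̂(ω) be the k-th order statistic of the multiset {S_1(ω), …, S_n(ω)}. If moreover the scores S_1, …, S_{n+1} are almost surely pairwise distinct, i.e. P({ω : S_i(ω) = S_j(ω) for some i ≠ j}) = 0, then P({ω : μ(X_{n+1}(ω)) − Q̂(ω) ≤ Y_{n+1}(ω) ≤ μ(X_{n+1}(ω)) + Q̂(ω)}) ≤ 1 − α + 1/(n+1). -/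

import Mathlib

open MeasureTheory Finset
open scoped ENNReal

lemma rank_count {ι : Type*} [Fintype ι] [DecidableEq ι] (f : ι → ℝ)
    (hf : Function.Injective f) (k : ℕ) (hk : k ≤ Fintype.card ι) :
    (univ.filter fun i => (univ.filter fun j => f j ≤ f i).card ≤ k).card = k := by
  set r : ι → ℕ := fun i => (univ.filter fun j => f j ≤ f i).card with hr
  have hrinj : Function.Injective r := by
    intro i j hij
    rcases le_total (f i) (f j) with h | h
    · have hsub : (univ.filter fun l => f l ≤ f i) ⊆ (univ.filter fun l => f l ≤ f j) := by
        intro l hl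
        simp only [mem_filter, mem_univ, true_and] at hl ⊢
        exact hl.trans h
      have := Finset.eq_of_subset_of_card_le hsub (le_of_eq hij.symm)
      have hji : f j ≤ f i := by
        have : j ∈ (univ.filter fun l => f l ≤ f i) := by
          rw [this]; simp
        simpa using this
      exact hf (le_antisymm h hji)
    · have hsub : (univ.filter fun l => f l ≤ f j) ⊆ (univ.filter fun l => f l ≤ f i) := by
        intro l hl
        simp only [mem_filter, mem_univ, true_and] at hl ⊢
        exact hl.trans h
      have := Finset.eq_of_subset_of_card_le hsub (le_of_eq hij)
      have hji : f i ≤ f j := by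
        have : i ∈ (univ.filter fun l => f l ≤ f j) := by
          rw [this]; simp
        simpa using this
      exact hf (le_antisymm hji h)
  have himg : univ.image r = Finset.Icc 1 (Fintype.card ι) := by
    apply Finset.eq_of_subset_of_card_le
    · intro m hm
      simp only [mem_image, mem_univ, true_and] at hm
      obtain ⟨i, rfl⟩ := hm
      simp only [Finset.mem_Icc]
      constructor
      · have : i ∈ (univ.filter fun j => f j ≤ f i) := by simp
        exact Finset.card_pos.mpr ⟨i, this⟩
      · exact (Finset.card_filter_le _ _).trans (by simp)
    · rw [Finset.card_image_of_injective _ hrinj]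
      simp [Nat.card_Icc]
  have h1 : (univ.filter fun i => r i ≤ k).card = ((univ.image r).filter (· ≤ k)).card := by
    rw [Finset.filter_image, Finset.card_image_of_injective _ hrinj]
  rw [h1, himg]
  have h2 : (Finset.Icc 1 (Fintype.card ι)).filter (· ≤ k) = Finset.Icc 1 k := by
    ext m
    simp only [mem_filter, Finset.mem_Icc]
    omega
  rw [h2, Nat.card_Icc]
  omega

lemma filter_lt_sorted {l : List ℝ} (hl : List.Pairwise (· ≤ ·) l) {m : ℕ}
    (hm : m < l.length) {s : ℝ} (hs : s ≤ l.getD m 0) :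
    (l.filter (fun x => decide (x < s))).length ≤ m := by
  have hsplit : l = l.take m ++ l.drop m := (List.take_append_drop m l).symm
  have hdrop : (l.drop m).filter (fun x => decide (x < s)) = [] := by
    rw [List.filter_eq_nil_iff]
    intro x hx
    simp only [decide_eq_true_eq, not_lt]
    obtain ⟨i, hi, rfl⟩ := List.mem_iff_getElem.mp hx
    have hmi : m + i < l.length := by
      have := List.length_drop (i := m) (l := l)
      omega
    rw [List.getElem_drop]
    have : l.getD m 0 ≤ l[m + i]'hmi := by
      rw [List.getD_eq_getElem l 0 hm]
      have := List.Pairwise.rel_get_of_le hl (a := ⟨m, hm⟩) (b := ⟨m + i, hmi⟩)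
        (by simp [Fin.le_def])
      simpa using this
    linarith
  calc (l.filter (fun x => decide (x < s))).length
      = ((l.take m).filter _).length + ((l.drop m).filter (fun x => decide (x < s))).length := by
        conv_lhs => rw [hsplit]
        rw [List.filter_append, List.length_append]
    _ ≤ m := by rw [hdrop]; simp; exact (List.length_filter_le _ _).trans (by simp)

/-- Validity of Split Conformal Prediction: upper bound. -/
theorem stmt_3 {Ω E : Type*} [MeasurableSpace Ω] [MeasurableSpace E]
    (P : Measure Ω) [IsProbabilityMeasure P] (n : ℕ)
    (X : Fin (n + 1) → Ω → E) (Y : Fin (n + 1) → Ω → ℝ)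
    (hmeas : ∀ i, Measurable (fun ω => (X i ω, Y i ω)))
    (hexch : ∀ σ : Equiv.Perm (Fin (n + 1)),
      Measure.map (fun ω => fun i => (X (σ i) ω, Y (σ i) ω)) P
        = Measure.map (fun ω => fun i => (X i ω, Y i ω)) P)
    (μ : E → ℝ) (hμ : Measurable μ)
    (α : ℝ) (hα : α ∈ Set.Ioo (0 : ℝ) 1)
    (k : ℕ) (hk : k = ⌈(1 - α) * (n + 1 : ℝ)⌉₊) (hkn : k ≤ n)
    (S : Fin (n + 1) → Ω → ℝ) (hS : ∀ i ω, S i ω = |Y i ω - μ (X i ω)|)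
    (hdistinct : P {ω | ∃ i j : Fin (n + 1), i ≠ j ∧ S i ω = S j ω} = 0)
    (Q : Ω → ℝ)
    (hQ : ∀ ω, Q ω =
      ((Finset.univ.val.map (fun i : Fin n => S i.castSucc ω)).sort (· ≤ ·)).getD (k - 1) 0) :
    P {ω | μ (X (Fin.last n) ω) - Q ω ≤ Y (Fin.last n) ω ∧
           Y (Fin.last n) ω ≤ μ (X (Fin.last n) ω) + Q ω}
      ≤ ENNReal.ofReal (1 - α + 1 / (n + 1 : ℝ)) := by
  obtain ⟨hα0, hα1⟩ := hα
  have hk1 : 1 ≤ k := by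
    rw [hk, Nat.one_le_ceil_iff]
    have : (0:ℝ) < 1 - α := by linarith
    positivity
  set Z : Ω → (Fin (n+1) → E × ℝ) := fun ω i => (X i ω, Y i ω) with hZ
  have hZmeas : Measurable Z := measurable_pi_lambda _ (fun i => hmeas i)
  set g : (Fin (n+1) → E × ℝ) → Fin (n+1) → ℝ := fun z i => |(z i).2 - μ (z i).1| with hg
  have hgmeas : ∀ i, Measurable (fun z => g z i) := fun i =>
    ((measurable_pi_apply i).snd.sub (hμ.comp (measurable_pi_apply i).fst)).abs
  have hgS : ∀ i ω, g (Z ω) i = S i ω := fun i ω => (hS i ω).symm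
  set R : (Fin (n+1) → E × ℝ) → Fin (n+1) → ℕ :=
    fun z i => (Finset.univ.filter fun j => g z j ≤ g z i).card with hR
  have hRmeas : ∀ i, Measurable fun z => R z i := by
    intro i
    have h : (fun z => R z i) = fun z => ∑ j : Fin (n+1), if g z j ≤ g z i then 1 else 0 := by
      funext z
      show (Finset.univ.filter fun j => g z j ≤ g z i).card = _
      rw [Finset.card_filter]
    rw [h]
    exact Finset.measurable_sum _ fun j _ =>
      Measurable.ite (measurableSet_le (hgmeas j) (hgmeas i)) measurable_const measurable_const
  set A : Fin (n+1) → Set (Fin (n+1) → E × ℝ) := fun i => {z | R z i ≤ k} with hA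
  have hAmeas : ∀ i, MeasurableSet (A i) := by
    intro i
    have h : A i = (fun z => R z i) ⁻¹' (Set.Iic k) := rfl
    rw [h]
    exact (hRmeas i) trivial
  set ν : Measure (Fin (n+1) → E × ℝ) := P.map Z with hν
  have hνprob : IsProbabilityMeasure ν := Measure.isProbabilityMeasure_map hZmeas.aemeasurable
  have key : ∀ i, ν (A i) = ν (A (Fin.last n)) := by
    intro i
    set σ := Equiv.swap (Fin.last n) i with hσ
    set T : (Fin (n+1) → E × ℝ) → (Fin (n+1) → E × ℝ) := fun z j => z (σ j) with hT
    have hTmeas : Measurable T := measurable_pi_lambda _ (fun j => measurable_pi_apply (σ j))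
    have hRT : ∀ z j, R (T z) j = R z (σ j) := by
      intro z j
      simp only [hR]
      apply Finset.card_bij' (fun l _ => σ l) (fun l _ => σ.symm l) <;>
        simp [hT, hg]
    have hTA : ∀ j, T ⁻¹' (A j) = A (σ j) := by
      intro j
      ext z
      simp only [Set.mem_preimage, hA, Set.mem_setOf_eq, hRT]
    have hcomp : (fun ω => fun j => (X (σ j) ω, Y (σ j) ω)) = T ∘ Z := rfl
    calc ν (A i) = P (Z ⁻¹' (A i)) := Measure.map_apply hZmeas (hAmeas i)
      _ = P (Z ⁻¹' (T ⁻¹' (A (Fin.last n)))) := by rw [hTA, hσ, Equiv.swap_apply_left]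
      _ = (P.map (T ∘ Z)) (A (Fin.last n)) := by
          rw [Measure.map_apply (hTmeas.comp hZmeas) (hAmeas _), Set.preimage_comp]
      _ = ν (A (Fin.last n)) := by rw [← hcomp, hexch σ]
  set D : Set (Fin (n+1) → E × ℝ) := {z | Function.Injective (g z)} with hD
  have hDc : Dᶜ = ⋃ (i : Fin (n+1)), ⋃ (j : Fin (n+1)), ⋃ (_ : i ≠ j), {z | g z i = g z j} := by
    ext z
    simp only [Set.mem_compl_iff, hD, Set.mem_setOf_eq, Set.mem_iUnion,
      Function.not_injective_iff]
    constructor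
    · rintro ⟨a, b, hab, hne⟩; exact ⟨a, b, hne, hab⟩
    · rintro ⟨a, b, hne, hab⟩; exact ⟨a, b, hab, hne⟩
  have hDcmeas : MeasurableSet Dᶜ := by
    rw [hDc]
    exact MeasurableSet.iUnion fun i => MeasurableSet.iUnion fun j =>
      MeasurableSet.iUnion fun _ => measurableSet_eq_fun (hgmeas i) (hgmeas j)
  have hνDc : ν Dᶜ = 0 := by
    rw [hν, Measure.map_apply hZmeas hDcmeas]
    have h : Z ⁻¹' Dᶜ = {ω | ∃ i j : Fin (n + 1), i ≠ j ∧ S i ω = S j ω} := by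
      ext ω
      simp only [Set.mem_preimage, hDc, Set.mem_iUnion, Set.mem_setOf_eq, hgS]
      tauto
    rw [h]; exact hdistinct
  have hcount : ∀ z ∈ D, (∑ i : Fin (n+1), (A i).indicator (fun _ => (1:ℝ≥0∞)) z) = (k : ℝ≥0∞) := by
    intro z hz
    have h1 : (∑ i : Fin (n+1), (A i).indicator (fun _ => (1:ℝ≥0∞)) z)
        = ((Finset.univ.filter fun i => R z i ≤ k).card : ℝ≥0∞) := by
      rw [Finset.card_filter]
      push_cast
      apply Finset.sum_congr rfl
      intro i _
      by_cases h : R z i ≤ k <;> simp [Set.indicator, hA, h]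
    rw [h1]
    norm_cast
    exact rank_count (g z) hz k (by simp [Fintype.card_fin]; omega)
  have hsum : ∑ i : Fin (n+1), ν (A i) = (k : ℝ≥0∞) := by
    calc ∑ i : Fin (n+1), ν (A i)
        = ∑ i : Fin (n+1), ∫⁻ z, (A i).indicator (fun _ => (1:ℝ≥0∞)) z ∂ν := by
          exact Finset.sum_congr rfl fun i _ => (lintegral_indicator_one (hAmeas i)).symm
      _ = ∫⁻ z, ∑ i : Fin (n+1), (A i).indicator (fun _ => (1:ℝ≥0∞)) z ∂ν := by
          rw [lintegral_finset_sum]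
          exact fun i _ => (measurable_one.indicator (hAmeas i))
      _ = ∫⁻ _, (k : ℝ≥0∞) ∂ν := by
          apply lintegral_congr_ae
          have hae : D ∈ ae ν := mem_ae_iff.mpr hνDc
          filter_upwards [hae] with z hz
          exact hcount z hz
      _ = (k : ℝ≥0∞) := by simp
  have hlast : (n+1 : ℝ≥0∞) * ν (A (Fin.last n)) = (k : ℝ≥0∞) := by
    rw [← hsum, Finset.sum_congr rfl fun i _ => key i, Finset.sum_const,
      Finset.card_univ, Fintype.card_fin, nsmul_eq_mul]
    push_cast
    ring
  -- the coverage event is contained in the low-rank event up to the null set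
  have hsubset : {ω | μ (X (Fin.last n) ω) - Q ω ≤ Y (Fin.last n) ω ∧
           Y (Fin.last n) ω ≤ μ (X (Fin.last n) ω) + Q ω}
      ⊆ Z ⁻¹' (A (Fin.last n)) ∪ {ω | ∃ i j : Fin (n + 1), i ≠ j ∧ S i ω = S j ω} := by
    intro ω hω
    by_cases hinj : ∃ i j : Fin (n+1), i ≠ j ∧ S i ω = S j ω
    · exact Or.inr hinj
    push_neg at hinj
    left
    obtain ⟨h1, h2⟩ := hω
    have hSQ : S (Fin.last n) ω ≤ Q ω := by
      rw [hS, abs_le]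
      constructor <;> linarith
    show R (Z ω) (Fin.last n) ≤ k
    have hRS : R (Z ω) (Fin.last n)
        = (Finset.univ.filter fun j => S j ω ≤ S (Fin.last n) ω).card := by
      simp only [hR, hgS]
    rw [hRS]
    set s := S (Fin.last n) ω with hs
    have hdec : (Finset.univ.filter fun j : Fin (n+1) => S j ω ≤ s).card
        = (Finset.univ.filter fun i : Fin n => S i.castSucc ω ≤ s).card + 1 := by
      rw [Finset.card_filter, Finset.card_filter, Fin.sum_univ_castSucc, if_pos (le_refl s)]
    rw [hdec]
    have hmono : (Finset.univ.filter fun i : Fin n => S i.castSucc ω ≤ s)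
        ⊆ (Finset.univ.filter fun i : Fin n => S i.castSucc ω < Q ω) := by
      intro i hi
      simp only [Finset.mem_filter, Finset.mem_univ, true_and] at hi ⊢
      have hne : S i.castSucc ω ≠ s :=
        hinj i.castSucc (Fin.last n) (Fin.castSucc_lt_last i).ne
      exact lt_of_lt_of_le (lt_of_le_of_ne hi hne) hSQ
    set M := Finset.univ.val.map (fun i : Fin n => S i.castSucc ω) with hM
    set l := M.sort (· ≤ ·) with hl
    have hlsort : List.Pairwise (· ≤ ·) l := Multiset.pairwise_sort _ _
    have hllen : l.length = n := by
      rw [hl, Multiset.length_sort, hM, Multiset.card_map]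
      simp
    have hkl : k - 1 < l.length := by omega
    have hcard : (Finset.univ.filter fun i : Fin n => S i.castSucc ω < Q ω).card ≤ k - 1 := by
      have hML : M.filter (fun x => x < Q ω) = ↑(l.filter (fun x => decide (x < Q ω))) := by
        conv_lhs => rw [← Multiset.sort_eq M (· ≤ ·)]
        rw [← hl, Multiset.filter_coe]
      have h2 : (Finset.univ.filter fun i : Fin n => S i.castSucc ω < Q ω).card
          = Multiset.card (M.filter (fun x => x < Q ω)) := by
        rw [hM, Multiset.filter_map, Multiset.card_map]
        rfl
      rw [h2, hML, Multiset.coe_card]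
      exact filter_lt_sorted hlsort hkl (le_of_eq (hQ ω))
    have := (Finset.card_le_card hmono).trans hcard
    omega
  have hApre : P (Z ⁻¹' (A (Fin.last n))) = ν (A (Fin.last n)) :=
    (Measure.map_apply hZmeas (hAmeas _)).symm
  have hbound : ν (A (Fin.last n)) ≤ ENNReal.ofReal (1 - α + 1 / (n + 1 : ℝ)) := by
    have hne : (n+1 : ℝ≥0∞) ≠ 0 := by simp
    have hnetop : (n+1 : ℝ≥0∞) ≠ ⊤ := by simp
    have hAval : ν (A (Fin.last n)) = (k : ℝ≥0∞) / (n+1 : ℝ≥0∞) :=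
      (ENNReal.eq_div_iff hne hnetop).mpr hlast
    rw [hAval]
    apply ENNReal.div_le_of_le_mul
    have hBpos : (0:ℝ) ≤ 1 - α + 1 / (n + 1 : ℝ) := by
      have : (0:ℝ) < 1 - α := by linarith
      positivity
    have hcast : (n+1 : ℝ≥0∞) = ENNReal.ofReal ((n:ℝ)+1) := by
      rw [ENNReal.ofReal_add (by positivity) zero_le_one]
      simp [ENNReal.ofReal_natCast]
    rw [hcast, ← ENNReal.ofReal_mul hBpos]
    have hkcast : (k : ℝ≥0∞) = ENNReal.ofReal (k:ℝ) := (ENNReal.ofReal_natCast k).symm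
    rw [hkcast]
    apply ENNReal.ofReal_le_ofReal
    have hceil : (k:ℝ) < (1-α)*(n+1) + 1 := by
      rw [hk]
      exact Nat.ceil_lt_add_one (by
        have : (0:ℝ) < 1 - α := by linarith
        positivity)
    have heq : (1 - α + 1/((n:ℝ)+1)) * ((n:ℝ)+1) = (1-α)*((n:ℝ)+1) + 1 := by
      field_simp
    rw [heq]
    push_cast at hceil ⊢
    linarith
  calc P {ω | μ (X (Fin.last n) ω) - Q ω ≤ Y (Fin.last n) ω ∧
           Y (Fin.last n) ω ≤ μ (X (Fin.last n) ω) + Q ω}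
      ≤ P (Z ⁻¹' (A (Fin.last n)) ∪ {ω | ∃ i j : Fin (n + 1), i ≠ j ∧ S i ω = S j ω}) :=
        measure_mono hsubset
    _ ≤ P (Z ⁻¹' (A (Fin.last n))) + P {ω | ∃ i j : Fin (n + 1), i ≠ j ∧ S i ω = S j ω} :=
        measure_union_le _ _
    _ = ν (A (Fin.last n)) := by rw [hdistinct, add_zero, hApre]
    _ ≤ ENNReal.ofReal (1 - α + 1 / (n + 1 : ℝ)) := hbound
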